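/- Let (S,·) and (S,⊙) be semigroups on the same set satisfying the left e-join law e⊙(x·y) = e⊙(x⊙y) for all x,y ∈ S (a left e-semig), and let J_e(x) := e⊙x. (A) If J_e is right e-periodic, i.e. e⊙(x·e) = e⊙x for all x, then: e⊙(x·y) = (e⊙x)⊙(e⊙y) for all x,y (J_e is a homomorphism from (S,·) to (S,⊙), and hence also an endomorphism of (S,⊙)); and J_e is a right canceler for both operations: e⊙(x·(e⊙y)) = e⊙(x·y) and e⊙(x⊙(e⊙y)) = e⊙(x⊙y) for all x,y. (B) If J_e is left e-periodic, i.e. e⊙(e·x) = e⊙x for all x, then J_e is a left canceler for both operations: e⊙((e⊙x)·y) = e⊙(x·y) and e⊙((e⊙x)⊙y) = e⊙(x⊙y) for all x,y. -/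
import Mathlib


/-- Let `(S, mul)` and `(S, op)` be semigroups on the same set
satisfying the left `e`-join law `e ⊙ (x·y) = e ⊙ (x ⊙ y)` (a left `e`-semig),
and let `J_e x := e ⊙ x`.
(A) If `J_e` is right `e`-periodic (`e ⊙ (x·e) = e ⊙ x`), then `J_e` is a homomorphism
from `(S,·)` to `(S,⊙)`, an endomorphism of `(S,⊙)`, and a right canceler for both
operations.
(B) If `J_e` is left `e`-periodic (`e ⊙ (e·x) = e ⊙ x`), then `J_e` is a left canceler
for both operations. -/
theorem stmt_10 {S : Type*} (mul op : S → S → S) (e : S)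
    (hmul : ∀ x y z : S, mul (mul x y) z = mul x (mul y z))
    (hop : ∀ x y z : S, op (op x y) z = op x (op y z))
    (hjoin : ∀ x y : S, op e (mul x y) = op e (op x y)) :
    ((∀ x : S, op e (mul x e) = op e x) →
      (∀ x y : S, op e (mul x y) = op (op e x) (op e y)) ∧
      (∀ x y : S, op e (op x y) = op (op e x) (op e y)) ∧
      (∀ x y : S, op e (mul x (op e y)) = op e (mul x y)) ∧
      (∀ x y : S, op e (op x (op e y)) = op e (op x y))) ∧
    ((∀ x : S, op e (mul e x) = op e x) →
      (∀ x y : S, op e (mul (op e x) y) = op e (mul x y)) ∧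
      (∀ x y : S, op e (op (op e x) y) = op e (op x y))) := by
  have h1 : ∀ x y : S, op e (mul x y) = op (op e x) y := by
    intro x y; rw [hjoin, ← hop]
  constructor
  · intro hr
    have hre : ∀ x : S, op (op e x) e = op e x := by
      intro x; rw [← h1, hr]
    have hom : ∀ x y : S, op e (mul x y) = op (op e x) (op e y) := by
      intro x y; rw [← hop, hre, ← h1]
    refine ⟨hom, fun x y => by rw [← hjoin, hom], ?_, ?_⟩
    · intro x y; rw [h1, ← hop, hre, ← h1]
    · intro x y; rw [← hjoin, h1, ← hop, hre, ← h1, hjoin]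
  · intro hl
    have hee : ∀ x : S, op e (op e x) = op e x := by
      intro x; rw [← hjoin, hl]
    constructor
    · intro x y; rw [h1, hee, ← h1]
    · intro x y; rw [← hjoin, h1, hee, ← h1, hjoin]
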